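/- Let P be a finite set of ground ASP rules and ⟨P⟩ its translation to a finite-choice logic program. For every stable model X of P, there is a solution D of ⟨P⟩ with X = { p : (p is tt) ∈ D }. -/

import Mathlib

open scoped Classical

namespace FCLP

/-! ### Terms -/

/-- Ground (Herbrand) terms: uninterpreted function symbols applied to ground terms. -/
inductive GTerm : Type where
  | func : ℕ → List GTerm → GTerm

/-- Terms possibly containing variables. -/
inductive VTerm : Type where
  | var : ℕ → VTerm
  | func : ℕ → List VTerm → VTerm

/-- A substitution is a total map from variables to ground terms. -/
abbrev Subst := ℕ → GTerm

mutual
  /-- Applying a substitution to a term. -/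
  def VTerm.subst (σ : Subst) : VTerm → GTerm
    | .var x => σ x
    | .func f args => .func f (VTerm.substList σ args)
  def VTerm.substList (σ : Subst) : List VTerm → List GTerm
    | [] => []
    | t :: ts => VTerm.subst σ t :: VTerm.substList σ ts
end

/-- The variable `x` occurs in the term. -/
inductive VTerm.HasVar : VTerm → ℕ → Prop where
  | var (x : ℕ) : VTerm.HasVar (.var x) x
  | func {f : ℕ} {args : List VTerm} {t : VTerm} {x : ℕ} :
      t ∈ args → VTerm.HasVar t x → VTerm.HasVar (.func f args) x

/-! ### Attributes, facts, rules, programs -/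

/-- An attribute `p(t₁,...,tₙ)`: a predicate applied to ground terms. -/
structure Attr where
  pred : ℕ
  args : List GTerm

/-- A fact `p(t̄) is v`. -/
structure Fact where
  attr : Attr
  value : GTerm

/-- A premise `p(t̄) is v`, possibly containing variables. -/
structure VAtom where
  pred : ℕ
  args : List VTerm
  value : VTerm

def VAtom.subst (σ : Subst) (A : VAtom) : Fact :=
  ⟨⟨A.pred, A.args.map (VTerm.subst σ)⟩, A.value.subst σ⟩

def VAtom.HasVar (A : VAtom) (x : ℕ) : Prop :=
  (∃ t ∈ A.args, t.HasVar x) ∨ A.value.HasVar x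

/-- A rule head: open `p(t̄) is? v` or closed `p(t̄) is {v₁,...,vₘ}`. -/
inductive Head : Type where
  | opn : ℕ → List VTerm → VTerm → Head
  | closed : ℕ → List VTerm → List VTerm → Head

def Head.HasVar : Head → ℕ → Prop
  | .opn _ args v, x => (∃ t ∈ args, t.HasVar x) ∨ v.HasVar x
  | .closed _ args vs, x => (∃ t ∈ args, t.HasVar x) ∨ ∃ v ∈ vs, v.HasVar x

/-- The ground attribute of a rule head under a substitution. -/
def Head.groundAttr (σ : Subst) : Head → Attr
  | .opn p args _ => ⟨p, args.map (VTerm.subst σ)⟩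
  | .closed p args _ => ⟨p, args.map (VTerm.subst σ)⟩

/-- A rule `H ← F` with a finite collection of premises. -/
structure Rule where
  head : Head
  prems : List VAtom

/-- Wellformedness: closed heads offer at least one value, and every
variable in the head occurs in a premise. -/
def Rule.WF (r : Rule) : Prop :=
  (∀ x, r.head.HasVar x → ∃ A ∈ r.prems, A.HasVar x) ∧
  (∀ p args vs, r.head = .closed p args vs → vs ≠ [])

/-- A program is a set of rules. -/
abbrev Program := Set Rule

/-- A program is a *finite* set of *wellformed* rules. -/
def Program.WFP (P : Program) : Prop := P.Finite ∧ ∀ r ∈ P, r.WF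

/-! ### Fact-set semantics -/

/-- A set of facts is consistent when each attribute has at most one value. -/
def Consistent (D : Set Fact) : Prop :=
  ∀ f ∈ D, ∀ g ∈ D, f.attr = g.attr → f = g

/-- `σ` satisfies the premises `F` in the fact-set database `D`. -/
def satF (σ : Subst) (F : List VAtom) (D : Set Fact) : Prop :=
  ∀ A ∈ F, A.subst σ ∈ D

/-- Fact-set evolution `D →_P S`. -/
inductive Evolve (P : Program) : Set Fact → Set (Set Fact) → Prop where
  | triv (D : Set Fact) : Evolve P D {D}
  | closed {D : Set Fact} {r : Rule} {p : ℕ} {args vs : List VTerm} {σ : Subst} :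
      r ∈ P → r.head = .closed p args vs → satF σ r.prems D →
      Evolve P D
        { E | ∃ v ∈ vs,
            E = insert (⟨⟨p, args.map (VTerm.subst σ)⟩, VTerm.subst σ v⟩ : Fact) D ∧
            Consistent E }
  | opn {D : Set Fact} {r : Rule} {p : ℕ} {args : List VTerm} {v : VTerm} {σ : Subst} :
      r ∈ P → r.head = .opn p args v → satF σ r.prems D →
      Evolve P D
        ({D} ∪ { E | E = insert (⟨⟨p, args.map (VTerm.subst σ)⟩, VTerm.subst σ v⟩ : Fact) D ∧
                     Consistent E })

/-- `P` allows `D` to step to `D'`. -/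
def Step (P : Program) (D D' : Set Fact) : Prop := ∃ S, Evolve P D S ∧ D' ∈ S

/-- A database is saturated when its only evolution is the singleton of itself. -/
def Saturated (P : Program) (D : Set Fact) : Prop := ∀ S, Evolve P D S → S = {D}

/-- A solution: a saturated database reachable from `∅` by a (finite) step sequence. -/
def Solution (P : Program) (D : Set Fact) : Prop :=
  Relation.ReflTransGen (Step P) ∅ D ∧ Saturated P D

/-! ### Constraints and constraint databases -/

/-- A constraint: `just t` or `noneOf X`. -/
inductive Constraint : Type where
  | just : GTerm → Constraint
  | noneOf : Set GTerm → Constraint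

/-- The order on constraints. -/
def Constraint.le : Constraint → Constraint → Prop
  | .noneOf X, .noneOf Y => X ⊆ Y
  | .noneOf X, .just t => t ∉ X
  | .just t, .just t' => t = t'
  | .just _, .noneOf _ => False

instance : LE Constraint := ⟨Constraint.le⟩

/-- Least upper bound of a (compatible) set of constraints: if some `just t` is present
it is the lub; otherwise it is `noneOf` of the union. -/
noncomputable def Constraint.lub (C : Set Constraint) : Constraint :=
  if h : ∃ t, Constraint.just t ∈ C then .just h.choose
  else .noneOf (⋃₀ { X | Constraint.noneOf X ∈ C })

/-- A constraint database: a map from ground attributes to constraints,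
ordered pointwise (via the `Pi` order). -/
abbrev CDB := Attr → Constraint

/-- The least constraint database: every attribute maps to `noneOf ∅`. -/
def cdbBot : CDB := fun _ => .noneOf ∅

/-- Pointwise least upper bound of a (compatible) set of constraint databases. -/
noncomputable def CDB.lub (S : Set CDB) : CDB :=
  fun a => Constraint.lub ((fun Δ => Δ a) '' S)

/-- A subset of a poset is compatible when it has an upper bound. -/
def Compatible {α : Type*} [LE α] (X : Set α) : Prop := ∃ y, ∀ x ∈ X, x ≤ y

/-- Binary compatibility. -/
def Compat {α : Type*} [LE α] (x y : α) : Prop := Compatible ({x, y} : Set α)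

/-- A choice set: a pairwise-incompatible set of constraint databases. -/
def IsChoiceSet (𝒞 : Set CDB) : Prop :=
  ∀ D ∈ 𝒞, ∀ E ∈ 𝒞, Compat D E → D = E

/-- The order on choice sets. -/
def ChoiceLE (𝒞₁ 𝒞₂ : Set CDB) : Prop :=
  ∀ D₂ ∈ 𝒞₂, ∃ D₁ ∈ 𝒞₁, D₁ ≤ D₂

/-- Least upper bound of an indexed family of choice sets:
`⋁ᵢ 𝒞ᵢ = { ⋁ Im(f) : f ∈ ∏ᵢ 𝒞ᵢ, Im(f) compatible }`. -/
noncomputable def ChoiceJoin {I : Type*} (𝒞 : I → Set CDB) : Set CDB :=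
  { E | ∃ f : I → CDB, (∀ i, f i ∈ 𝒞 i) ∧ Compatible (Set.range f) ∧
        E = CDB.lub (Set.range f) }

/-- Least upper bound of a set of choice sets. -/
noncomputable def ChoiceSJoin (S : Set (Set CDB)) : Set CDB :=
  ChoiceJoin (fun C : S => (C : Set CDB))

/-- Greatest lower bound of a set of choice sets:
`⋀ X = ⋁ {𝒞 : ∀ x ∈ X, 𝒞 ≤ x}` (join over choice-set lower bounds). -/
noncomputable def ChoiceMeet (S : Set (Set CDB)) : Set CDB :=
  ChoiceSJoin { C | IsChoiceSet C ∧ ∀ X ∈ S, ChoiceLE C X }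

/-! ### Immediate consequence -/

/-- `σ` satisfies `F` in the constraint database `Δ`. -/
def satC (σ : Subst) (F : List VAtom) (Δ : CDB) : Prop :=
  ∀ A ∈ F, Constraint.just (A.value.subst σ) ≤ Δ ⟨A.pred, A.args.map (VTerm.subst σ)⟩

/-- The constraint database mapping `a` to `c` and every other attribute to `noneOf ∅`. -/
noncomputable def unitCDB (a : Attr) (c : Constraint) : CDB :=
  fun a' => if a' = a then c else .noneOf ∅

/-- The choice set `⟨σH⟩` determined by a ground rule head. -/
noncomputable def headChoice (σ : Subst) : Head → Set CDB
  | .opn p args v =>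
      { unitCDB ⟨p, args.map (VTerm.subst σ)⟩ (.just (v.subst σ)),
        unitCDB ⟨p, args.map (VTerm.subst σ)⟩ (.noneOf {v.subst σ}) }
  | .closed p args vs =>
      { Δ | ∃ v ∈ vs, Δ = unitCDB ⟨p, args.map (VTerm.subst σ)⟩ (.just (v.subst σ)) }

/-- The immediate consequence operator
`T_P(Δ) = {Δ} ∨ ⋁{ ⟨σH⟩ : (H ← F) ∈ P, σ satisfies F in Δ }`. -/
noncomputable def TP (P : Program) (Δ : CDB) : Set CDB :=
  ChoiceSJoin
    (insert {Δ} { C | ∃ r ∈ P, ∃ σ : Subst, satC σ r.prems Δ ∧ C = headChoice σ r.head })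

/-- The attribute-specific immediate consequence operator `T_{P[a]}`. -/
noncomputable def TPa (P : Program) (a : Attr) (Δ : CDB) : Set CDB :=
  ChoiceSJoin
    { C | ∃ r ∈ P, ∃ σ : Subst, satC σ r.prems Δ ∧ r.head.groundAttr σ = a ∧
          C = headChoice σ r.head }

/-- The lifted immediate consequence operator `T_P*(𝒞) = ⋃_{Δ ∈ 𝒞} T_P(Δ)`. -/
noncomputable def TPs (P : Program) (𝒞 : Set CDB) : Set CDB :=
  { E | ∃ Δ ∈ 𝒞, E ∈ TP P Δ }

/-- The least fixed point of `T_P*`, defined à la Knaster–Tarski as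
`⋀ {𝒞 : T_P*(𝒞) ≤ 𝒞}`. -/
noncomputable def lfpTPs (P : Program) : Set CDB :=
  ChoiceMeet { C | IsChoiceSet C ∧ ChoiceLE (TPs P C) C }

/-! ### Positive and finite constraint databases, promotion and erasure -/

/-- A constraint database is positive when `noneOf X` only occurs with `X = ∅`. -/
def CDBPositive (Δ : CDB) : Prop := ∀ a X, Δ a = .noneOf X → X = ∅

/-- A constraint database is finite. -/
def CDBFinite (Δ : CDB) : Prop :=
  { a | Δ a ≠ .noneOf ∅ }.Finite ∧ ∀ a X, Δ a = .noneOf X → X.Finite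

/-- Promotion of a (consistent) fact set to a constraint database. -/
noncomputable def promote (D : Set Fact) : CDB :=
  fun a => if h : ∃ v, (⟨a, v⟩ : Fact) ∈ D then .just h.choose else .noneOf ∅

/-- Erasure of a constraint database to a fact set. -/
def eraseCDB (Δ : CDB) : Set Fact := { f | Δ f.attr = .just f.value }

/-! ### The abstract algorithm -/

/-- `P` allows `Δ` to take an algorithmic step to any `Δ' ∈ {Δ} ∨ T_{P[a]}(Δ)`
for some attribute `a`, provided `T_P(Δ) ≠ ∅`. -/
noncomputable def AlgStep (P : Program) (Δ Δ' : CDB) : Prop :=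
  TP P Δ ≠ ∅ ∧ ∃ a : Attr, Δ' ∈ ChoiceSJoin {({Δ} : Set CDB), TPa P a Δ}

/-! ### Datalog -/

/-- A datalog atom, possibly with variables. -/
structure DAtom where
  pred : ℕ
  args : List VTerm

/-- A ground datalog atom. -/
structure GAtom where
  pred : ℕ
  args : List GTerm

def DAtom.subst (σ : Subst) (A : DAtom) : GAtom := ⟨A.pred, A.args.map (VTerm.subst σ)⟩

/-- A datalog rule `p(t̄) ← p₁(t̄₁), ..., pₙ(t̄ₙ)`. -/
structure DRule where
  head : DAtom
  prems : List DAtom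

/-- Every variable of the head appears in a premise. -/
def DRule.WF (r : DRule) : Prop :=
  ∀ x, (∃ t ∈ r.head.args, t.HasVar x) → ∃ A ∈ r.prems, ∃ t ∈ A.args, t.HasVar x

/-- The datalog immediate consequence operator. -/
def dImmCons (P : Set DRule) (X : Set GAtom) : Set GAtom :=
  { g | ∃ r ∈ P, ∃ σ : Subst, (∀ A ∈ r.prems, A.subst σ ∈ X) ∧ g = r.head.subst σ }

/-- The least model of a datalog program: the least fixed point of `dImmCons`. -/
def dModel (P : Set DRule) : Set GAtom := ⋂₀ { X | dImmCons P X ⊆ X }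

/-- Translation of a datalog program to a finite-choice logic program, using the
constant with (fresh) function symbol `u` as the value `unit`. -/
def trDatalog (u : ℕ) (P : Set DRule) : Program :=
  { r | ∃ dr ∈ P,
      r = ⟨Head.closed dr.head.pred dr.head.args [VTerm.func u []],
           dr.prems.map (fun A => ⟨A.pred, A.args, VTerm.func u []⟩)⟩ }

/-! ### Answer set programming -/

/-- A ground ASP rule `p ← p₁,...,pₙ, ¬q₁,...,¬qₘ` over propositional atoms. -/
structure ASPRule where
  head : ℕ
  pos : List ℕ
  neg : List ℕ

/-- One step of the immediate consequence operator of the reduct `P^X`. -/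
def reductCons (P : Set ASPRule) (X : Set ℕ) (Y : Set ℕ) : Set ℕ :=
  { p | ∃ r ∈ P, r.head = p ∧ (∀ q ∈ r.pos, q ∈ Y) ∧ (∀ q ∈ r.neg, q ∉ X) }

/-- The least model of the reduct `P^X`. -/
def reductModel (P : Set ASPRule) (X : Set ℕ) : Set ℕ :=
  ⋂₀ { Y | reductCons P X Y ⊆ Y }

/-- `X` is a stable model of `P` when the least model of the reduct `P^X` equals `X`. -/
def StableModel (P : Set ASPRule) (X : Set ℕ) : Prop := reductModel P X = X

/-- The fresh constant `tt` (as a ground term). -/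
def ttT : GTerm := .func 0 []
/-- The fresh constant `ff` (as a ground term). -/
def ffT : GTerm := .func 1 []
/-- The constant `tt` as a (closed) term of the rule language. -/
def ttV : VTerm := .func 0 []
/-- The constant `ff` as a (closed) term of the rule language. -/
def ffV : VTerm := .func 1 []

/-- The premise `p is tt`. -/
def posPrem (p : ℕ) : VAtom := ⟨p, [], ttV⟩
/-- The premise `q is ff`. -/
def negPrem (q : ℕ) : VAtom := ⟨q, [], ffV⟩

/-- Translation of an ASP program to a finite-choice logic program: each rule
`p ← p₁,...,pₙ, ¬q₁,...,¬qₘ` becomes `m` open rules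
`qⱼ is? ff ← p₁ is tt,...,pₙ is tt, q₁ is ff,...,q_{j-1} is ff` and one closed rule
`p is {tt} ← p₁ is tt,...,pₙ is tt, q₁ is ff,...,qₘ is ff`. -/
def trASP (P : Set ASPRule) : Program :=
  { r | ∃ ar ∈ P,
      (∃ j : Fin ar.neg.length,
        r = ⟨Head.opn (ar.neg.get j) [] ffV,
             ar.pos.map posPrem ++ (ar.neg.take j.val).map negPrem⟩) ∨
      r = ⟨Head.closed ar.head [] [ttV],
           ar.pos.map posPrem ++ ar.neg.map negPrem⟩ }

section ASPSound

variable (P : Set ASPRule) (X : Set ℕ)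

/-- The fact `p is tt`. -/
def ttF (p : ℕ) : Fact := ⟨⟨p, []⟩, ttT⟩
/-- The fact `q is ff`. -/
def ffF (q : ℕ) : Fact := ⟨⟨q, []⟩, ffT⟩

lemma ttF_ne_ffF (p q : ℕ) : ttF p ≠ ffF q := by
  intro h
  have : ttT = ffT := congrArg Fact.value h
  simp [ttT, ffT] at this

/-- Negative atoms that must be set to `ff` in the solution. -/
def Fneg : Set ℕ :=
  {q | ∃ ar ∈ P, ∃ j : Fin ar.neg.length, ar.neg.get j = q ∧
      (∀ p ∈ ar.pos, p ∈ X) ∧ (∀ x ∈ ar.neg.take j.val, x ∉ X) ∧ q ∉ X}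

lemma Fneg_notX {q : ℕ} (h : q ∈ Fneg P X) : q ∉ X := by
  obtain ⟨ar, har, j, hget, hpos, htk, hq⟩ := h
  exact hq

/-- The candidate solution database. -/
def DF : Set Fact := ttF '' X ∪ ffF '' Fneg P X

lemma ttF_mem_DF {p : ℕ} : ttF p ∈ DF P X ↔ p ∈ X := by
  constructor
  · rintro (⟨q, hq, he⟩ | ⟨q, hq, he⟩)
    · obtain rfl : q = p := by simpa [ttF] using he
      exact hq
    · exact absurd he (by simp [ttF, ffF, ffT, ttT])
  · exact fun hp => Set.mem_union_left _ ⟨p, hp, rfl⟩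

lemma ffF_mem_DF {q : ℕ} : ffF q ∈ DF P X ↔ q ∈ Fneg P X := by
  constructor
  · rintro (⟨p, hp, he⟩ | ⟨p, hp, he⟩)
    · exact absurd he (by simp [ttF, ffF, ffT, ttT])
    · obtain rfl : p = q := by simpa [ffF] using he
      exact hp
  · exact fun hq => Set.mem_union_right _ ⟨q, hq, rfl⟩

lemma DF_consistent : Consistent (DF P X) := by
  rintro f (⟨p, hp, rfl⟩ | ⟨p, hp, rfl⟩) g (⟨q, hq, rfl⟩ | ⟨q, hq, rfl⟩) hattr
  · obtain rfl : p = q := by simpa [ttF] using hattr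
    rfl
  · obtain rfl : p = q := by simpa [ttF, ffF] using hattr
    exact absurd hp (Fneg_notX P X hq)
  · obtain rfl : p = q := by simpa [ttF, ffF] using hattr
    exact absurd hq (Fneg_notX P X hp)
  · obtain rfl : p = q := by simpa [ffF] using hattr
    rfl

lemma consistent_mono {D E : Set Fact} (h : D ⊆ E) (hE : Consistent E) : Consistent D :=
  fun f hf g hg => hE f (h hf) g (h hg)

lemma step_subset {Q : Program} {D D' : Set Fact} (h : Step Q D D') : D ⊆ D' := by
  obtain ⟨S, hev, hmem⟩ := h
  cases hev with
  | triv =>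
      rw [Set.mem_singleton_iff] at hmem; subst hmem; exact subset_rfl
  | closed hr hh hs =>
      obtain ⟨v, hv, rfl, -⟩ := hmem
      exact Set.subset_insert _ _
  | opn hr hh hs =>
      rcases hmem with hmem | hmem
      · rw [Set.mem_singleton_iff] at hmem; subst hmem; exact subset_rfl
      · obtain ⟨rfl, -⟩ := hmem
        exact Set.subset_insert _ _

lemma step_mono {Q : Program} {Df D₁ D₁' D₂ : Set Fact} (hcons : Consistent Df)
    (h : Step Q D₁ D₁') (h1f : D₁' ⊆ Df) (h12 : D₁ ⊆ D₂) (h2f : D₂ ⊆ Df) :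
    Step Q D₂ (D₂ ∪ D₁') ∧ D₂ ∪ D₁' ⊆ Df := by
  have hu : D₂ ∪ D₁' ⊆ Df := Set.union_subset h2f h1f
  refine ⟨?_, hu⟩
  obtain ⟨S, hev, hmem⟩ := h
  cases hev with
  | triv =>
      rw [Set.mem_singleton_iff] at hmem; subst hmem
      rw [Set.union_eq_self_of_subset_right h12]
      exact ⟨_, Evolve.triv D₂, rfl⟩
  | closed hr hh hs =>
      obtain ⟨v, hv, rfl, -⟩ := hmem
      refine ⟨_, Evolve.closed hr hh (fun A hA => h12 (hs A hA)), ?_⟩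
      refine ⟨v, hv, ?_, consistent_mono hu hcons⟩
      rw [Set.union_insert, Set.union_eq_self_of_subset_right h12]
  | opn hr hh hs =>
      rcases hmem with hmem | hmem
      · rw [Set.mem_singleton_iff] at hmem; subst hmem
        rw [Set.union_eq_self_of_subset_right h12]
        exact ⟨_, Evolve.triv D₂, rfl⟩
      · obtain ⟨rfl, -⟩ := hmem
        refine ⟨_, Evolve.opn hr hh (fun A hA => h12 (hs A hA)), Set.mem_union_right _ ?_⟩
        refine ⟨?_, consistent_mono hu hcons⟩
        rw [Set.union_insert, Set.union_eq_self_of_subset_right h12]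

/-- Reachability from `∅` staying inside `DF`. -/
def Reach (D : Set Fact) : Prop :=
  Relation.ReflTransGen (fun D D' => Step (trASP P) D D' ∧ D' ⊆ DF P X) ∅ D

lemma reach_subset {D : Set Fact} (h : Reach P X D) : D ⊆ DF P X := by
  rcases Relation.ReflTransGen.cases_tail h with h | ⟨c, _, hc⟩
  · subst h; exact Set.empty_subset _
  · exact hc.2

lemma reach_replay {A B C : Set Fact}
    (h : Relation.ReflTransGen (fun D D' => Step (trASP P) D D' ∧ D' ⊆ DF P X) A B)
    (hAC : A ⊆ C) (hC : C ⊆ DF P X) :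
    Relation.ReflTransGen (fun D D' => Step (trASP P) D D' ∧ D' ⊆ DF P X) C (C ∪ B) ∧
      C ∪ B ⊆ DF P X := by
  induction h with
  | refl =>
      rw [Set.union_eq_self_of_subset_right hAC]
      exact ⟨Relation.ReflTransGen.refl, hC⟩
  | tail hAB' hstep ih =>
      obtain ⟨ih1, ih2⟩ := ih
      have hm := step_mono (DF_consistent P X) hstep.1 hstep.2 Set.subset_union_right ih2
      rw [Set.union_assoc, Set.union_eq_self_of_subset_left (step_subset hstep.1)] at hm
      exact ⟨ih1.tail ⟨hm.1, hm.2⟩, hm.2⟩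

lemma reach_union {D₁ D₂ : Set Fact} (h1 : Reach P X D₁) (h2 : Reach P X D₂) :
    Reach P X (D₁ ∪ D₂) :=
  h1.trans (reach_replay P X h2 (Set.empty_subset _) (reach_subset P X h1)).1

lemma reductCons_mono {Y Z : Set ℕ} (h : Y ⊆ Z) : reductCons P X Y ⊆ reductCons P X Z := by
  rintro p ⟨r, hr, hh, hpos, hneg⟩
  exact ⟨r, hr, hh, fun q hq => h (hpos q hq), hneg⟩

lemma stable_least (hX : StableModel P X) {Y : Set ℕ} (hY : reductCons P X Y ⊆ Y) : X ⊆ Y := by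
  rw [← hX]
  exact Set.sInter_subset_of_mem hY

lemma reduct_closed (hX : StableModel P X) : reductCons P X X ⊆ X := by
  intro p hp
  rw [← hX]
  exact Set.mem_sInter.2 fun Y hY => hY (reductCons_mono P X (stable_least P X hX hY) hp)

lemma satF_pos {σ : Subst} {D : Set Fact} {ar : ASPRule} {rest : List VAtom}
    (h : satF σ (ar.pos.map posPrem ++ rest) D) : ∀ p ∈ ar.pos, ttF p ∈ D :=
  fun p hp => h (posPrem p) (List.mem_append_left _ (List.mem_map_of_mem hp))

lemma satF_neg {σ : Subst} {D : Set Fact} {pre : List VAtom} {l : List ℕ}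
    (h : satF σ (pre ++ l.map negPrem) D) : ∀ q ∈ l, ffF q ∈ D :=
  fun q hq => h (negPrem q) (List.mem_append_right _ (List.mem_map_of_mem hq))

lemma satF_build {σ : Subst} {D : Set Fact} {ar : ASPRule} {l : List ℕ}
    (hp : ∀ p ∈ ar.pos, ttF p ∈ D) (hn : ∀ q ∈ l, ffF q ∈ D) :
    satF σ (ar.pos.map posPrem ++ l.map negPrem) D := by
  intro A hA
  rcases List.mem_append.1 hA with h | h
  · obtain ⟨p, hpm, rfl⟩ := List.mem_map.1 h
    exact hp p hpm
  · obtain ⟨q, hqm, rfl⟩ := List.mem_map.1 h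
    exact hn q hqm

lemma addNeg {ar : ASPRule} (har : ar ∈ P) (hpos : ∀ p ∈ ar.pos, p ∈ X)
    {D₀ : Set Fact} (hD₀ : Reach P X D₀) (hpos' : ∀ p ∈ ar.pos, ttF p ∈ D₀) :
    ∀ k, k ≤ ar.neg.length → (∀ q ∈ ar.neg.take k, q ∉ X) →
    ∃ D', Reach P X D' ∧ D₀ ⊆ D' ∧ ∀ q ∈ ar.neg.take k, ffF q ∈ D' := by
  intro k
  induction k with
  | zero => exact fun _ _ => ⟨D₀, hD₀, subset_rfl, by simp⟩
  | succ k ih =>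
      intro hk hnX
      have hk' : k < ar.neg.length := hk
      have htk : ar.neg.take (k + 1) = ar.neg.take k ++ [ar.neg.get ⟨k, hk'⟩] := by
        rw [List.take_succ, List.getElem?_eq_getElem hk']
        simp [List.get_eq_getElem]
      have hsub1 : ∀ q ∈ ar.neg.take k, q ∈ ar.neg.take (k + 1) := by
        intro q hq; rw [htk]; exact List.mem_append_left _ hq
      obtain ⟨D', hR, hsub, hff⟩ := ih (le_of_lt hk') (fun q hq => hnX q (hsub1 q hq))
      have hqkX : ar.neg.get ⟨k, hk'⟩ ∉ X := by
        refine hnX _ ?_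
        rw [htk]
        exact List.mem_append_right _ (List.mem_singleton.2 rfl)
      have hqkF : ar.neg.get ⟨k, hk'⟩ ∈ Fneg P X :=
        ⟨ar, har, ⟨k, hk'⟩, rfl, hpos, fun x hx => hnX x (hsub1 x hx), hqkX⟩
      have hrule : (⟨Head.opn (ar.neg.get ⟨k, hk'⟩) [] ffV,
          ar.pos.map posPrem ++ (ar.neg.take k).map negPrem⟩ : Rule) ∈ trASP P :=
        ⟨ar, har, Or.inl ⟨⟨k, hk'⟩, rfl⟩⟩
      have hsat : satF (fun _ => ttT) (ar.pos.map posPrem ++ (ar.neg.take k).map negPrem) D' :=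
        satF_build (fun p hp => hsub (hpos' p hp)) hff
      have hDf : insert (ffF (ar.neg.get ⟨k, hk'⟩)) D' ⊆ DF P X :=
        Set.insert_subset ((ffF_mem_DF P X).2 hqkF) (reach_subset P X hR)
      have hstep : Step (trASP P) D' (insert (ffF (ar.neg.get ⟨k, hk'⟩)) D') := by
        refine ⟨_, Evolve.opn hrule rfl hsat, Set.mem_union_right _ ?_⟩
        exact ⟨rfl, consistent_mono hDf (DF_consistent P X)⟩
      refine ⟨_, hR.tail ⟨hstep, hDf⟩, hsub.trans (Set.subset_insert _ _), ?_⟩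
      intro q hq
      rw [htk] at hq
      rcases List.mem_append.1 hq with h | h
      · exact Set.subset_insert _ _ (hff q h)
      · rw [List.mem_singleton.1 h]
        exact Set.mem_insert _ _

lemma fireClosed {ar : ASPRule} (har : ar ∈ P) (hhX : ar.head ∈ X)
    {D' : Set Fact} (hR : Reach P X D') (hp : ∀ p ∈ ar.pos, ttF p ∈ D')
    (hn : ∀ q ∈ ar.neg, ffF q ∈ D') :
    ∃ D'', Reach P X D'' ∧ ttF ar.head ∈ D'' := by
  have hrule : (⟨Head.closed ar.head [] [ttV],
      ar.pos.map posPrem ++ ar.neg.map negPrem⟩ : Rule) ∈ trASP P :=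
    ⟨ar, har, Or.inr rfl⟩
  have hsat : satF (fun _ => ttT) (ar.pos.map posPrem ++ ar.neg.map negPrem) D' :=
    satF_build hp hn
  have hDf : insert (ttF ar.head) D' ⊆ DF P X :=
    Set.insert_subset ((ttF_mem_DF P X).2 hhX) (reach_subset P X hR)
  have hstep : Step (trASP P) D' (insert (ttF ar.head) D') := by
    refine ⟨_, Evolve.closed hrule rfl hsat, ?_⟩
    exact ⟨ttV, List.mem_singleton.2 rfl, rfl, consistent_mono hDf (DF_consistent P X)⟩
  exact ⟨_, hR.tail ⟨hstep, hDf⟩, Set.mem_insert _ _⟩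

lemma list_reach (l : List ℕ) (h : ∀ p ∈ l, ∃ D, Reach P X D ∧ ttF p ∈ D) :
    ∃ D, Reach P X D ∧ ∀ p ∈ l, ttF p ∈ D := by
  induction l with
  | nil => exact ⟨∅, Relation.ReflTransGen.refl, by simp⟩
  | cons p l ih =>
      obtain ⟨D₁, hR₁, hp₁⟩ := h p List.mem_cons_self
      obtain ⟨D₂, hR₂, hp₂⟩ := ih (fun q hq => h q (List.mem_cons_of_mem _ hq))
      refine ⟨D₁ ∪ D₂, reach_union P X hR₁ hR₂, ?_⟩
      intro q hq
      rcases List.mem_cons.1 hq with rfl | hq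
      · exact Set.mem_union_left _ hp₁
      · exact Set.mem_union_right _ (hp₂ q hq)

lemma X_reach (hX : StableModel P X) : ∀ p ∈ X, ∃ D, Reach P X D ∧ ttF p ∈ D := by
  have hsub : X ⊆ {p | p ∈ X ∧ ∃ D, Reach P X D ∧ ttF p ∈ D} := by
    apply stable_least P X hX
    rintro p ⟨ar, har, rfl, hpos, hneg⟩
    have hposX : ∀ q ∈ ar.pos, q ∈ X := fun q hq => (hpos q hq).1
    have hhX : ar.head ∈ X := reduct_closed P X hX ⟨ar, har, rfl, hposX, hneg⟩
    refine ⟨hhX, ?_⟩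
    obtain ⟨D₀, hR₀, hp₀⟩ := list_reach P X ar.pos (fun q hq => (hpos q hq).2)
    obtain ⟨D', hR, hsub', hff⟩ := addNeg P X har hposX hR₀ hp₀ ar.neg.length le_rfl
      (by simpa using hneg)
    exact fireClosed P X har hhX hR (fun q hq => hsub' (hp₀ q hq))
      (by simpa using hff)
  exact fun p hp => (hsub hp).2

lemma F_reach (hX : StableModel P X) : ∀ q ∈ Fneg P X, ∃ D, Reach P X D ∧ ffF q ∈ D := by
  rintro q ⟨ar, har, j, rfl, hpos, htake, hqX⟩
  obtain ⟨D₀, hR₀, hp₀⟩ := list_reach P X ar.pos (fun p hp => X_reach P X hX p (hpos p hp))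
  have hjlen : j.val + 1 ≤ ar.neg.length := j.isLt
  have htk : ar.neg.take (j.val + 1) = ar.neg.take j.val ++ [ar.neg.get j] := by
    rw [List.take_succ, List.getElem?_eq_getElem j.isLt]
    simp [List.get_eq_getElem]
  have hnX : ∀ x ∈ ar.neg.take (j.val + 1), x ∉ X := by
    intro x hx
    rw [htk] at hx
    rcases List.mem_append.1 hx with h | h
    · exact htake x h
    · rw [List.mem_singleton.1 h]; exact hqX
  obtain ⟨D', hR, hsub', hff⟩ := addNeg P X har hpos hR₀ hp₀ (j.val + 1) hjlen hnX
  refine ⟨D', hR, hff _ ?_⟩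
  rw [htk]
  exact List.mem_append_right _ (List.mem_singleton.2 rfl)

lemma X_finite (hfin : P.Finite) (hX : StableModel P X) : X.Finite := by
  have hsub : X ⊆ ASPRule.head '' P := by
    apply stable_least P X hX
    rintro p ⟨ar, har, rfl, -, -⟩
    exact ⟨ar, har, rfl⟩
  exact (hfin.image _).subset hsub

lemma F_finite (hfin : P.Finite) : (Fneg P X).Finite := by
  have hsub : Fneg P X ⊆ ⋃ ar ∈ P, {q | q ∈ ar.neg} := by
    rintro q ⟨ar, har, j, rfl, -, -, -⟩
    exact Set.mem_biUnion har (ar.neg.get_mem _)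
  exact (Set.Finite.biUnion hfin fun ar _ => ar.neg.finite_toSet).subset hsub

end ASPSound
/-- Soundness of the ASP translation: every stable model of `P` arises from a
solution of `⟨P⟩`. -/
theorem asp_translation_sound (P : Set ASPRule) (hfin : P.Finite) (X : Set ℕ)
    (hX : StableModel P X) :
    ∃ D : Set Fact, Solution (trASP P) D ∧
      X = { p | (⟨⟨p, []⟩, ttT⟩ : Fact) ∈ D } := by
  have hDFfin : (DF P X).Finite :=
    ((X_finite P X hfin hX).image _).union ((F_finite P X hfin).image _)
  -- every finite subset of DF is contained in a reachable database
  have main : ∀ E : Set Fact, E.Finite → E ⊆ DF P X → ∃ D, Reach P X D ∧ E ⊆ D := by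
    intro E hE
    refine Set.Finite.induction_on
      (motive := fun E _ => E ⊆ DF P X → ∃ D, Reach P X D ∧ E ⊆ D) E hE ?_ ?_
    · intro _
      exact ⟨∅, Relation.ReflTransGen.refl, subset_rfl⟩
    · intro f E' hfE' hE' ih hsub
      obtain ⟨D₁, hR₁, hD₁⟩ := ih ((Set.subset_insert _ _).trans hsub)
      have hf : f ∈ DF P X := hsub (Set.mem_insert _ _)
      obtain ⟨D₂, hR₂, hf₂⟩ : ∃ D, Reach P X D ∧ f ∈ D := by
        rcases hf with ⟨p, hp, rfl⟩ | ⟨q, hq, rfl⟩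
        · exact X_reach P X hX p hp
        · exact F_reach P X hX q hq
      exact ⟨D₁ ∪ D₂, reach_union P X hR₁ hR₂,
        Set.insert_subset (Set.mem_union_right _ hf₂) (hD₁.trans Set.subset_union_left)⟩
  obtain ⟨D, hRD, hsubD⟩ := main (DF P X) hDFfin subset_rfl
  have hDeq : D = DF P X := subset_antisymm (reach_subset P X hRD) hsubD
  subst hDeq
  -- saturation
  have hsatu : Saturated (trASP P) (DF P X) := by
    intro S hS
    cases hS with
    | triv => rfl
    | @closed r p args vs σ hr hh hsatf =>
        obtain ⟨ar, har, hor⟩ := hr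
        rcases hor with ⟨j, hrj⟩ | hrc
        · subst hrj
          exact absurd hh (by simp)
        · subst hrc
          have hh' : Head.closed ar.head [] [ttV] = Head.closed p args vs := hh
          injection hh' with h1 h2 h3
          subst h1; subst h2; subst h3
          have hs' : satF σ (ar.pos.map posPrem ++ ar.neg.map negPrem) (DF P X) := hsatf
          have hposX : ∀ p ∈ ar.pos, p ∈ X :=
            fun p hp => (ttF_mem_DF P X).1 (satF_pos hs' p hp)
          have hnegX : ∀ q ∈ ar.neg, q ∉ X :=
            fun q hq => Fneg_notX P X ((ffF_mem_DF P X).1 (satF_neg hs' q hq))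
          have hhX : ar.head ∈ X := reduct_closed P X hX ⟨ar, har, rfl, hposX, hnegX⟩
          have hmem : ttF ar.head ∈ DF P X := (ttF_mem_DF P X).2 hhX
          ext E
          simp only [Set.mem_setOf_eq, Set.mem_singleton_iff, List.mem_singleton]
          constructor
          · rintro ⟨v, hv, rfl, -⟩
            obtain rfl : v = ttV := hv
            exact Set.insert_eq_self.2 hmem
          · rintro rfl
            exact ⟨ttV, rfl, (Set.insert_eq_self.2 hmem).symm, DF_consistent P X⟩
    | @opn r p args v σ hr hh hsatf =>
        obtain ⟨ar, har, hor⟩ := hr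
        rcases hor with ⟨j, hrj⟩ | hrc
        · subst hrj
          have hh' : Head.opn (ar.neg.get j) [] ffV = Head.opn p args v := hh
          injection hh' with h1 h2 h3
          subst h1; subst h2; subst h3
          have hs' : satF σ (ar.pos.map posPrem ++ (ar.neg.take j.val).map negPrem)
              (DF P X) := hsatf
          have hposX : ∀ p ∈ ar.pos, p ∈ X :=
            fun p hp => (ttF_mem_DF P X).1 (satF_pos hs' p hp)
          have htakeX : ∀ x ∈ ar.neg.take j.val, x ∉ X :=
            fun q hq => Fneg_notX P X ((ffF_mem_DF P X).1 (satF_neg hs' q hq))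
          by_cases hq : ar.neg.get j ∈ X
          · have httm : ttF (ar.neg.get j) ∈ DF P X := (ttF_mem_DF P X).2 hq
            ext E
            simp only [Set.mem_union, Set.mem_setOf_eq, Set.mem_singleton_iff]
            constructor
            · rintro (rfl | ⟨rfl, hcons⟩)
              · rfl
              · exfalso
                have h1 : ttF (ar.neg.get j) ∈
                    insert (ffF (ar.neg.get j)) (DF P X) := Set.mem_insert_of_mem _ httm
                have h2 : ffF (ar.neg.get j) ∈
                    insert (ffF (ar.neg.get j)) (DF P X) := Set.mem_insert _ _
                exact ttF_ne_ffF _ _ (hcons _ h1 _ h2 rfl)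
            · rintro rfl
              exact Or.inl rfl
          · have hqF : ar.neg.get j ∈ Fneg P X := ⟨ar, har, j, rfl, hposX, htakeX, hq⟩
            have hffm : ffF (ar.neg.get j) ∈ DF P X := (ffF_mem_DF P X).2 hqF
            ext E
            simp only [Set.mem_union, Set.mem_setOf_eq, Set.mem_singleton_iff]
            constructor
            · rintro (rfl | ⟨rfl, -⟩)
              · rfl
              · exact Set.insert_eq_self.2 hffm
            · rintro rfl
              exact Or.inl rfl
        · subst hrc
          exact absurd hh (by simp)
  refine ⟨DF P X, ⟨?_, hsatu⟩, ?_⟩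
  · exact Relation.ReflTransGen.mono (r := fun D D' => Step (trASP P) D D' ∧ D' ⊆ DF P X)
      (p := Step (trASP P)) (fun a b h => h.1) _ _ hRD
  · ext p
    simp only [Set.mem_setOf_eq]
    exact (ttF_mem_DF P X).symm

end FCLP
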